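/- Let α be a real algebraic number of degree m and L the Liouville constant. Then for each n with 1 ≤ n ≤ m-1, w*_n(αL) ≤ 2m²n + m - 1; i.e., for every w > 2m²n + m - 1, only finitely many real algebraic numbers γ of degree n satisfy 0 < |αL - γ| < H(γ)^{-w-1}. -/

import Mathlib

open Polynomial Filter

/-- Primitive integer minimal polynomial of a real number. -/
noncomputable def intMin (x : ℝ) : Polynomial ℤ :=
  (IsLocalization.integerNormalization (nonZeroDivisors ℤ) (minpoly ℚ x)).primPart

/-- Height of an integer polynomial: max absolute value of its coefficients. -/
def polyHeight (P : Polynomial ℤ) : ℕ :=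
  (Finset.range (P.natDegree + 1)).sup fun i => (P.coeff i).natAbs

/-- Height of an algebraic real number. -/
noncomputable def aheight (x : ℝ) : ℕ := polyHeight (intMin x)

/-- Degree of a real number over ℚ. -/
noncomputable def adeg (x : ℝ) : ℕ := (minpoly ℚ x).natDegree

lemma ringHom_aeval_int {R S : Type*} [CommRing R] [CommRing S] (f : R →+* S)
    (x : R) (Q : Polynomial ℤ) :
    f (Polynomial.aeval x Q) = Polynomial.aeval (f x) Q := by
  rw [Polynomial.aeval_def, Polynomial.aeval_def, Polynomial.hom_eval₂]
  congr 1
  exact Subsingleton.elim _ _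

lemma intMin_ne_zero (x : ℝ) : intMin x ≠ 0 := Polynomial.primPart_ne_zero _

lemma intMin_aeval {x : ℝ} (hx : IsAlgebraic ℚ x) : Polynomial.aeval x (intMin x) = 0 := by
  have h1 : Polynomial.aeval x (minpoly ℚ x) = 0 := minpoly.aeval ℚ x
  have h2 := IsLocalization.integerNormalization_aeval_eq_zero (nonZeroDivisors ℤ)
    (minpoly ℚ x) h1
  have hne : IsLocalization.integerNormalization (nonZeroDivisors ℤ) (minpoly ℚ x) ≠ 0 := by
    rw [Ne, IsFractionRing.integerNormalization_eq_zero_iff]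
    exact minpoly.ne_zero hx.isIntegral
  exact Polynomial.aeval_primPart_eq_zero hne h2

lemma intMin_natDegree {x : ℝ} (hx : IsAlgebraic ℚ x) : (intMin x).natDegree = adeg x := by
  obtain ⟨b, hb⟩ := IsLocalization.integerNormalization_map_to_map (nonZeroDivisors ℤ)
    (minpoly ℚ x)
  have hb0 : (((b : ℤ) : ℚ)) ≠ 0 := by
    exact_mod_cast nonZeroDivisors.coe_ne_zero b
  have h1 : (intMin x).natDegree
      = (IsLocalization.integerNormalization (nonZeroDivisors ℤ) (minpoly ℚ x)).natDegree :=
    Polynomial.natDegree_primPart _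
  have h3 : ((IsLocalization.integerNormalization (nonZeroDivisors ℤ)
        (minpoly ℚ x)).map (algebraMap ℤ ℚ)).natDegree
      = (IsLocalization.integerNormalization (nonZeroDivisors ℤ) (minpoly ℚ x)).natDegree := by
    apply Polynomial.natDegree_map_eq_of_injective
    rw [algebraMap_int_eq]
    exact Int.cast_injective
  have h2 : ((IsLocalization.integerNormalization (nonZeroDivisors ℤ)
        (minpoly ℚ x)).map (algebraMap ℤ ℚ)).natDegree = (minpoly ℚ x).natDegree := by
    rw [hb, ← Int.cast_smul_eq_zsmul ℚ, Polynomial.smul_eq_C_mul, Polynomial.natDegree_C_mul hb0]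
  rw [h1, ← h3, h2, adeg]

lemma coeff_abs_le_polyHeight (P : Polynomial ℤ) (i : ℕ) :
    |((P.coeff i : ℤ) : ℝ)| ≤ (polyHeight P : ℝ) := by
  rcases le_or_gt i P.natDegree with h | h
  · have hmem : i ∈ Finset.range (P.natDegree + 1) := Finset.mem_range.mpr (by omega)
    have : (P.coeff i).natAbs ≤ polyHeight P :=
      Finset.le_sup (f := fun i => (P.coeff i).natAbs) hmem
    calc |((P.coeff i : ℤ) : ℝ)| = ((P.coeff i).natAbs : ℝ) := by
          rw [Nat.cast_natAbs, Int.cast_abs]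
      _ ≤ (polyHeight P : ℝ) := by exact_mod_cast this
  · rw [Polynomial.coeff_eq_zero_of_natDegree_lt h]
    simp

lemma one_le_polyHeight {P : Polynomial ℤ} (hP : P ≠ 0) : 1 ≤ polyHeight P := by
  have h : P.coeff P.natDegree ≠ 0 := by
    rw [← Polynomial.leadingCoeff]
    exact Polynomial.leadingCoeff_ne_zero.mpr hP
  have h1 : 1 ≤ (P.coeff P.natDegree).natAbs := Int.natAbs_pos.mpr h
  exact le_trans h1 (Finset.le_sup (f := fun i => (P.coeff i).natAbs)
    (Finset.mem_range.mpr (by omega)))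

lemma one_le_natAbs_leadingCoeff {P : Polynomial ℤ} (hP : P ≠ 0) :
    1 ≤ P.leadingCoeff.natAbs :=
  Int.natAbs_pos.mpr (Polynomial.leadingCoeff_ne_zero.mpr hP)

-- |aeval z Q| ≤ (n+1) * Hq * M^n  for |z| ≤ M, 1 ≤ M
lemma aeval_int_bound {Q : Polynomial ℤ} {n : ℕ} (hd : Q.natDegree ≤ n) {Hq M : ℝ}
    (hc : ∀ i, |((Q.coeff i : ℤ) : ℝ)| ≤ Hq) (hM : 1 ≤ M) {z : ℂ}
    (hz : ‖z‖ ≤ M) :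
    ‖Polynomial.aeval z Q‖ ≤ (n + 1 : ℝ) * Hq * M ^ n := by
  have h0 : Polynomial.aeval z Q = ∑ i ∈ Finset.range (n + 1), Q.coeff i • z ^ i :=
    Polynomial.aeval_eq_sum_range' (by omega) z
  rw [h0]
  calc ‖∑ i ∈ Finset.range (n + 1), Q.coeff i • z ^ i‖
      ≤ ∑ i ∈ Finset.range (n + 1), ‖Q.coeff i • z ^ i‖ := by
        exact norm_sum_le _ _
    _ ≤ ∑ _i ∈ Finset.range (n + 1), Hq * M ^ n := by
        apply Finset.sum_le_sum
        intro i hi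
        rw [zsmul_eq_mul, norm_mul, norm_pow]
        have h1 : ‖((Q.coeff i : ℤ) : ℂ)‖ ≤ Hq := by
          rw [Complex.norm_intCast]; exact hc i
        have h2 : ‖z‖ ^ i ≤ M ^ n := by
          calc ‖z‖ ^ i ≤ M ^ i :=
                pow_le_pow_left₀ (norm_nonneg z) hz i
            _ ≤ M ^ n := pow_le_pow_right₀ hM (by have := Finset.mem_range.mp hi; omega)
        have hHq : (0:ℝ) ≤ Hq := le_trans (abs_nonneg _) (hc 0)
        exact mul_le_mul h1 h2 (by positivity) hHq
    _ = (n + 1 : ℝ) * Hq * M ^ n := by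
        rw [Finset.sum_const, Finset.card_range, nsmul_eq_mul]
        push_cast; ring

-- difference bound over ℝ
lemma aeval_sub_bound {Q : Polynomial ℤ} {n : ℕ} (hd : Q.natDegree ≤ n) {Hq M : ℝ}
    (hc : ∀ i, |((Q.coeff i : ℤ) : ℝ)| ≤ Hq) (hM : 1 ≤ M) {x y : ℝ}
    (hx : |x| ≤ M) (hy : |y| ≤ M) :
    |Polynomial.aeval x Q - Polynomial.aeval y Q|
      ≤ ((n : ℝ) + 1) ^ 2 * Hq * M ^ n * |x - y| := by
  have hHq : (0:ℝ) ≤ Hq := le_trans (abs_nonneg _) (hc 0)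
  have h0 : Polynomial.aeval x Q = ∑ i ∈ Finset.range (n + 1), Q.coeff i • x ^ i :=
    Polynomial.aeval_eq_sum_range' (by omega) x
  have h1 : Polynomial.aeval y Q = ∑ i ∈ Finset.range (n + 1), Q.coeff i • y ^ i :=
    Polynomial.aeval_eq_sum_range' (by omega) y
  rw [h0, h1, ← Finset.sum_sub_distrib]
  have key : ∀ i ∈ Finset.range (n + 1),
      |Q.coeff i • x ^ i - Q.coeff i • y ^ i| ≤ ((n:ℝ)+1) * Hq * M ^ n * |x - y| := by
    intro i hi
    have hin : i ≤ n := by have := Finset.mem_range.mp hi; omega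
    have hdiff : x ^ i - y ^ i = (∑ j ∈ Finset.range i, x ^ j * y ^ (i - 1 - j)) * (x - y) :=
      (geom_sum₂_mul x y i).symm
    rw [zsmul_eq_mul, zsmul_eq_mul, ← mul_sub, hdiff]
    rw [abs_mul, abs_mul]
    have hsum : |∑ j ∈ Finset.range i, x ^ j * y ^ (i - 1 - j)| ≤ (n : ℝ) * M ^ n := by
      calc |∑ j ∈ Finset.range i, x ^ j * y ^ (i - 1 - j)|
          ≤ ∑ j ∈ Finset.range i, |x ^ j * y ^ (i - 1 - j)| := Finset.abs_sum_le_sum_abs _ _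
        _ ≤ ∑ _j ∈ Finset.range i, M ^ n := by
            apply Finset.sum_le_sum
            intro j hj
            rw [abs_mul, abs_pow, abs_pow]
            have hxj : |x| ^ j ≤ M ^ j := pow_le_pow_left₀ (abs_nonneg x) hx j
            have hyj : |y| ^ (i-1-j) ≤ M ^ (i-1-j) := pow_le_pow_left₀ (abs_nonneg y) hy _
            calc |x| ^ j * |y| ^ (i-1-j) ≤ M ^ j * M ^ (i-1-j) :=
                  mul_le_mul hxj hyj (by positivity) (by positivity)
              _ = M ^ (j + (i - 1 - j)) := by rw [pow_add]
              _ ≤ M ^ n := pow_le_pow_right₀ hM (by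
                  have := Finset.mem_range.mp hj; omega)
        _ = (i : ℝ) * M ^ n := by
            rw [Finset.sum_const, Finset.card_range, nsmul_eq_mul]
        _ ≤ (n : ℝ) * M ^ n := by
            apply mul_le_mul_of_nonneg_right _ (by positivity)
            exact_mod_cast hin
    calc |((Q.coeff i : ℤ) : ℝ)| * (|∑ j ∈ Finset.range i, x ^ j * y ^ (i-1-j)| * |x - y|)
        ≤ Hq * (((n:ℝ) * M ^ n) * |x - y|) := by
          apply mul_le_mul (hc i) _ (by positivity) hHq
          exact mul_le_mul_of_nonneg_right hsum (abs_nonneg _)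
      _ ≤ ((n:ℝ)+1) * Hq * M ^ n * |x - y| := by nlinarith [mul_nonneg (mul_nonneg hHq (pow_nonneg (le_trans zero_le_one hM) n)) (abs_nonneg (x - y))]
  calc |∑ i ∈ Finset.range (n + 1), (Q.coeff i • x ^ i - Q.coeff i • y ^ i)|
      ≤ ∑ i ∈ Finset.range (n + 1), |Q.coeff i • x ^ i - Q.coeff i • y ^ i| :=
        Finset.abs_sum_le_sum_abs _ _
    _ ≤ ∑ _i ∈ Finset.range (n + 1), ((n:ℝ)+1) * Hq * M ^ n * |x - y| :=
        Finset.sum_le_sum key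
    _ = ((n:ℝ)+1) * (((n:ℝ)+1) * Hq * M ^ n * |x - y|) := by
        rw [Finset.sum_const, Finset.card_range, nsmul_eq_mul]; push_cast; ring
    _ = ((n : ℝ) + 1) ^ 2 * Hq * M ^ n * |x - y| := by ring

-- root bound over ℂ
lemma root_bound {P : Polynomial ℤ} {m : ℕ} (hdeg : P.natDegree = m) (hm : 1 ≤ m)
    (hne : P ≠ 0) {z : ℂ} (hz : Polynomial.aeval z P = 0) :
    ‖z‖ ≤ (m : ℝ) * (polyHeight P : ℝ) := by
  have hH1 : (1:ℝ) ≤ (polyHeight P : ℝ) := by exact_mod_cast one_le_polyHeight hne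
  have hmH : (1:ℝ) ≤ (m : ℝ) * (polyHeight P : ℝ) := by
    have : (1:ℝ) ≤ (m:ℝ) := by exact_mod_cast hm
    nlinarith
  rcases le_or_gt (‖z‖) 1 with h | h
  · linarith
  · -- |z| > 1
    have h0 : Polynomial.aeval z P = ∑ i ∈ Finset.range (m + 1), P.coeff i • z ^ i :=
      Polynomial.aeval_eq_sum_range' (by omega) z
    rw [h0, Finset.sum_range_succ] at hz
    have hlead : P.coeff m • z ^ m = -∑ i ∈ Finset.range m, P.coeff i • z ^ i := by
      linear_combination hz
    have habs : ‖P.coeff m • z ^ m‖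
        ≤ (m : ℝ) * (polyHeight P : ℝ) * ‖z‖ ^ (m - 1) := by
      rw [hlead, norm_neg]
      calc ‖∑ i ∈ Finset.range m, P.coeff i • z ^ i‖
          ≤ ∑ i ∈ Finset.range m, ‖P.coeff i • z ^ i‖ :=
            norm_sum_le _ _
        _ ≤ ∑ _i ∈ Finset.range m, (polyHeight P : ℝ) * ‖z‖ ^ (m - 1) := by
            apply Finset.sum_le_sum
            intro i hi
            rw [zsmul_eq_mul, norm_mul, norm_pow, Complex.norm_intCast]
            apply mul_le_mul (coeff_abs_le_polyHeight P i)
              (pow_le_pow_right₀ h.le (by have := Finset.mem_range.mp hi; omega))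
              (by positivity) (by linarith)
        _ = (m : ℝ) * ((polyHeight P : ℝ) * ‖z‖ ^ (m-1)) := by
            rw [Finset.sum_const, Finset.card_range, nsmul_eq_mul]
        _ = (m : ℝ) * (polyHeight P : ℝ) * ‖z‖ ^ (m - 1) := by ring
    have hlc : (1:ℝ) ≤ ‖((P.coeff m : ℤ) : ℂ)‖ := by
      rw [Complex.norm_intCast]
      have : P.coeff m ≠ 0 := by
        rw [← hdeg, ← Polynomial.leadingCoeff]
        exact Polynomial.leadingCoeff_ne_zero.mpr hne
      have := Int.one_le_abs this
      calc (1:ℝ) = ((1:ℤ):ℝ) := by norm_num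
        _ ≤ ((|P.coeff m| : ℤ) : ℝ) := by exact_mod_cast this
        _ = |((P.coeff m : ℤ):ℝ)| := by rw [Int.cast_abs]
    have hzm : ‖z‖ ^ m = ‖z‖ ^ (m - 1) * ‖z‖ := by
      rw [← pow_succ]
      congr 1
      omega
    have hfin : ‖z‖ ^ (m-1) * ‖z‖
        ≤ (m : ℝ) * (polyHeight P : ℝ) * ‖z‖ ^ (m - 1) := by
      calc ‖z‖ ^ (m-1) * ‖z‖ = 1 * ‖z‖ ^ m := by
            rw [hzm]; ring
        _ ≤ ‖((P.coeff m : ℤ) : ℂ)‖ * ‖z‖ ^ m := by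
            apply mul_le_mul_of_nonneg_right hlc (by positivity)
        _ = ‖P.coeff m • z ^ m‖ := by
            rw [zsmul_eq_mul, norm_mul, norm_pow]
        _ ≤ (m : ℝ) * (polyHeight P : ℝ) * ‖z‖ ^ (m - 1) := habs
    have hpos : (0:ℝ) < ‖z‖ ^ (m - 1) := by positivity
    have h2 := hfin
    rw [mul_comm (‖z‖ ^ (m-1)) (‖z‖)] at h2
    exact le_of_mul_le_mul_right h2 hpos

open IntermediateField in
set_option maxHeartbeats 1000000 in
lemma sep_lemma {α : ℝ} (hα : IsAlgebraic ℚ α) {m n : ℕ} (hma : adeg α = m) (hnm : n < m)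
    {Q : Polynomial ℤ} (hQ0 : Q ≠ 0) (hQd : Q.natDegree ≤ n) {Hq : ℝ}
    (hc : ∀ i, |((Q.coeff i : ℤ) : ℝ)| ≤ Hq) (hHq1 : 1 ≤ Hq)
    {p q : ℤ} (hp : 0 < p) (hpq : p ≤ q) :
    1 / ((((intMin α).leadingCoeff.natAbs : ℝ) * (q : ℝ)) ^ (n * m) *
        (((n : ℝ) + 1) * Hq * ((m : ℝ) * (polyHeight (intMin α) : ℝ)) ^ n) ^ (m - 1))
      ≤ |Polynomial.aeval (((p : ℝ) / (q : ℝ)) * α) Q| := by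
  classical
  have hq : 0 < q := lt_of_lt_of_le hp hpq
  have hq0R : (0:ℝ) < (q:ℝ) := by exact_mod_cast hq
  have hp0R : (0:ℝ) < (p:ℝ) := by exact_mod_cast hp
  set A : Polynomial ℤ := intMin α with hA
  have hA0 : A ≠ 0 := intMin_ne_zero α
  have hAdeg : A.natDegree = m := by rw [hA, intMin_natDegree hα, hma]
  have hm1 : 1 ≤ m := by omega
  have hAev : Polynomial.aeval α A = 0 := intMin_aeval hα
  set M : ℝ := (m : ℝ) * (polyHeight A : ℝ) with hM
  have hM1 : (1:ℝ) ≤ M := by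
    have h1 : (1:ℝ) ≤ (polyHeight A : ℝ) := by exact_mod_cast one_le_polyHeight hA0
    have h2 : (1:ℝ) ≤ (m:ℝ) := by exact_mod_cast hm1
    nlinarith
  set aA : ℝ := (A.leadingCoeff.natAbs : ℝ) with haA
  have haA1 : (1:ℝ) ≤ aA := by rw [haA]; exact_mod_cast one_le_natAbs_leadingCoeff hA0
  set r : ℚ := (p : ℚ) / (q : ℚ) with hr
  have hqQ : ((q:ℚ)) ≠ 0 := by exact_mod_cast hq.ne'
  have hr0 : r ≠ 0 := by
    rw [hr]; exact div_ne_zero (by exact_mod_cast hp.ne') hqQ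
  have hrR : ((r : ℚ) : ℝ) = (p:ℝ)/(q:ℝ) := by rw [hr]; push_cast; ring
  have hrabs : |((r:ℚ):ℝ)| ≤ 1 := by
    rw [hrR, abs_div, abs_of_pos hq0R, abs_of_pos hp0R, div_le_one hq0R]
    exact_mod_cast hpq
  set t : ℝ := Polynomial.aeval (((p:ℝ)/(q:ℝ)) * α) Q with ht
  -- nonvanishing of t
  have ht0 : t ≠ 0 := by
    intro h
    have hcomp : Polynomial.aeval α
        ((Q.map (algebraMap ℤ ℚ)).comp (Polynomial.C r * Polynomial.X)) = 0 := by
      rw [Polynomial.aeval_comp, map_mul, Polynomial.aeval_C, Polynomial.aeval_X,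
        Polynomial.aeval_map_algebraMap]
      rw [eq_ratCast (algebraMap ℚ ℝ) r, hrR]
      exact h
    have hQmap : Q.map (algebraMap ℤ ℚ) ≠ 0 := by
      intro hzero
      apply hQ0
      have := Polynomial.map_injective (algebraMap ℤ ℚ)
        (by rw [algebraMap_int_eq]; exact Int.cast_injective)
      apply this
      rw [hzero, Polynomial.map_zero]
    have hCrX : Polynomial.C r * Polynomial.X ≠ (0 : Polynomial ℚ) :=
      mul_ne_zero (Polynomial.C_ne_zero.mpr hr0) Polynomial.X_ne_zero
    have hne : (Q.map (algebraMap ℤ ℚ)).comp (Polynomial.C r * Polynomial.X) ≠ 0 := by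
      intro hzero
      rcases Polynomial.comp_eq_zero_iff.mp hzero with h1 | h1
      · exact hQmap h1
      · apply hCrX
        rw [h1.2]
        have hc0 : (Polynomial.C r * Polynomial.X : Polynomial ℚ).coeff 0 = 0 := by
          simp
        rw [hc0]; simp
    have hdle := minpoly.degree_le_of_ne_zero ℚ α hne hcomp
    have hnat := Polynomial.natDegree_le_natDegree hdle
    rw [Polynomial.natDegree_comp, Polynomial.natDegree_C_mul_X r hr0,
      Polynomial.natDegree_map_eq_of_injective
        (by rw [algebraMap_int_eq]; exact Int.cast_injective)] at hnat
    have hmin : (minpoly ℚ α).natDegree = m := hma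
    rw [mul_one] at hnat
    omega
  -- the number field part
  have hint : IsIntegral ℚ α := hα.isIntegral
  haveI : FiniteDimensional ℚ ℚ⟮α⟯ := IntermediateField.adjoin.finiteDimensional hint
  set K : IntermediateField ℚ ℝ := ℚ⟮α⟯ with hK
  set g : K := IntermediateField.AdjoinSimple.gen ℚ α with hgdef
  have hg : algebraMap K ℝ g = α := IntermediateField.AdjoinSimple.algebraMap_gen ℚ α
  have hfin : Module.finrank ℚ K = m := by
    rw [hK, IntermediateField.adjoin.finrank hint]
    exact hma
  set β : K := algebraMap ℚ K r * g with hβ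
  have hβR : algebraMap K ℝ β = ((r:ℚ):ℝ) * α := by
    rw [hβ, map_mul, hg, ← IsScalarTower.algebraMap_apply ℚ K ℝ, eq_ratCast (algebraMap ℚ ℝ) r]
  set c : ℤ := A.leadingCoeff * q with hcdef
  have hc0 : c ≠ 0 := mul_ne_zero (Polynomial.leadingCoeff_ne_zero.mpr hA0) hq.ne'
  have hcabs : |((c:ℤ):ℝ)| = aA * (q:ℝ) := by
    rw [hcdef, haA]
    push_cast
    rw [abs_mul, abs_of_pos hq0R, Nat.cast_natAbs, Int.cast_abs]
  set y : K := (c : K) ^ n * Polynomial.aeval β Q with hy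
  have hyR : algebraMap K ℝ y = ((c:ℤ):ℝ) ^ n * t := by
    rw [hy, map_mul, map_pow, map_intCast, ringHom_aeval_int (algebraMap K ℝ) β Q, hβR, hrR, ht]
  have hβQ0 : Polynomial.aeval β Q ≠ 0 := by
    intro h
    apply ht0
    have h2 := ringHom_aeval_int (algebraMap K ℝ) β Q
    rw [h, map_zero, hβR, hrR] at h2
    rw [ht]
    exact h2.symm
  have hcK : (c : K) ≠ 0 := by
    intro h
    have : ((c:ℤ):ℝ) = 0 := by rw [← map_intCast (algebraMap K ℝ) c, h, map_zero]
    exact hc0 (by exact_mod_cast this)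
  have hy0 : y ≠ 0 := mul_ne_zero (pow_ne_zero _ hcK) hβQ0
  -- integrality of y
  have hgA : Polynomial.aeval g A = 0 := by
    apply (algebraMap K ℝ).injective
    rw [ringHom_aeval_int (algebraMap K ℝ) g A, hg, hAev, map_zero]
  have hinj : ∀ z : ℤ, algebraMap ℤ K z = 0 → z = 0 := by
    intro z hz
    have : ((z:ℤ):ℝ) = 0 := by
      rw [algebraMap_int_eq] at hz
      have hz' : ((z : ℤ) : K) = 0 := hz
      rw [← map_intCast (algebraMap K ℝ) z, hz', map_zero]
    exact_mod_cast this
  have hlcg : IsIntegral ℤ ((algebraMap ℤ K A.leadingCoeff) * g) :=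
    ⟨A.integralNormalization, Polynomial.monic_integralNormalization hA0, by
      rw [← Polynomial.aeval_def]
      exact Polynomial.integralNormalization_aeval_eq_zero hgA hinj⟩
  have hcβg : (c : K) * β = algebraMap ℤ K (A.leadingCoeff * p) * g := by
    have h2 : ((A.leadingCoeff * q : ℤ) : ℚ) * r = ((A.leadingCoeff * p : ℤ) : ℚ) := by
      rw [hr]; field_simp; push_cast; ring
    have h1 : ((A.leadingCoeff * q : ℤ) : K) * algebraMap ℚ K r
        = algebraMap ℤ K (A.leadingCoeff * p) := by
      rw [← map_intCast (algebraMap ℚ K) (A.leadingCoeff * q), ← map_mul, h2,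
        map_intCast (algebraMap ℚ K), algebraMap_int_eq]
      rfl
    rw [hβ, hcdef, ← mul_assoc, h1]
  have hcβ : IsIntegral ℤ ((c:K) * β) := by
    rw [hcβg, map_mul]
    have hre : (algebraMap ℤ K A.leadingCoeff) * (algebraMap ℤ K p) * g
        = (algebraMap ℤ K p) * ((algebraMap ℤ K A.leadingCoeff) * g) := by ring
    rw [hre]
    exact isIntegral_algebraMap.mul hlcg
  have hyint : IsIntegral ℤ y := by
    have hexp : y = ∑ i ∈ Finset.range (n+1),
        (algebraMap ℤ K (Q.coeff i * c ^ (n - i))) * ((c:K) * β) ^ i := by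
      rw [hy, Polynomial.aeval_eq_sum_range' (by omega : Q.natDegree < n + 1), Finset.mul_sum]
      apply Finset.sum_congr rfl
      intro i hi
      have hin : i ≤ n := by have := Finset.mem_range.mp hi; omega
      rw [zsmul_eq_mul, algebraMap_int_eq, map_mul, map_pow, mul_pow,
        show ((Int.castRingHom K) (Q.coeff i) : K) = ((Q.coeff i : ℤ) : K) from rfl,
        show ((Int.castRingHom K) c : K) = ((c : ℤ) : K) from rfl,
        show (c:K)^n = (c:K)^(n-i) * (c:K)^i by rw [← pow_add]; congr 1; omega]
      ring
    rw [hexp]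
    apply IsIntegral.sum
    intro i _
    exact isIntegral_algebraMap.mul (hcβ.pow i)
  -- the norm
  set N : ℚ := Algebra.norm ℚ y with hN
  have hNint : IsIntegral ℤ N := Algebra.isIntegral_norm ℚ hyint
  have hN0 : N ≠ 0 := by
    rw [hN]
    exact (Algebra.norm_ne_zero_iff).mpr hy0
  obtain ⟨z, hz⟩ := IsIntegrallyClosed.isIntegral_iff.mp hNint
  have hz0 : z ≠ 0 := by
    rintro rfl
    apply hN0
    rw [← hz]
    simp
  have hNabs : (1:ℝ) ≤ |((N:ℚ):ℝ)| := by
    have h1 : 1 ≤ |z| := Int.one_le_abs hz0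
    have h2 : ((N:ℚ):ℝ) = ((z:ℤ):ℝ) := by
      rw [← hz]
      push_cast
      norm_num
    rw [h2, ← Int.cast_abs]
    exact_mod_cast h1
  -- embeddings
  have hcard : Fintype.card (K →ₐ[ℚ] ℂ) = m := by
    rw [AlgHom.card ℚ K ℂ]
    exact hfin
  set σ₀ : K →ₐ[ℚ] ℂ := (Complex.ofRealHom.comp (algebraMap K ℝ)).toRatAlgHom with hσ₀
  have hσ₀app : ∀ x : K, σ₀ x = ((algebraMap K ℝ x : ℝ) : ℂ) := fun x => rfl
  have hprod : ((N:ℚ):ℂ) = ∏ σ : K →ₐ[ℚ] ℂ, σ y := by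
    have h := Algebra.norm_eq_prod_embeddings ℚ ℂ y
    rw [← h, eq_ratCast (algebraMap ℚ ℂ) N]
  set B : ℝ := ((n:ℝ)+1) * Hq * M ^ n with hB
  have hBparts : (0:ℝ) < ((n:ℝ)+1) := by positivity
  have hMn1 : (1:ℝ) ≤ M ^ n := one_le_pow₀ hM1
  have hB1 : 1 ≤ B := by
    rw [hB]
    have h1 : (1:ℝ) ≤ (n:ℝ)+1 := by have : (0:ℝ) ≤ (n:ℝ) := Nat.cast_nonneg n; linarith
    calc (1:ℝ) = 1 * 1 * 1 := by norm_num
      _ ≤ ((n:ℝ)+1) * Hq * M^n :=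
          mul_le_mul (mul_le_mul h1 hHq1 zero_le_one (by linarith)) hMn1 zero_le_one
            (mul_nonneg (by linarith) (by linarith))
  have hbound : ∀ σ : K →ₐ[ℚ] ℂ, ‖σ y‖ ≤ (aA * (q:ℝ)) ^ n * B := by
    intro σ
    have hσy : σ y = ((c:ℤ):ℂ) ^ n * Polynomial.aeval (σ β) Q := by
      rw [hy, map_mul, map_pow, map_intCast]
      congr 1
      exact ringHom_aeval_int (σ : K →+* ℂ) β Q
    have hσg : Polynomial.aeval (σ g) A = 0 := by
      rw [show σ g = (σ : K →+* ℂ) g from rfl, ← ringHom_aeval_int (σ : K →+* ℂ) g A, hgA,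
        map_zero]
    have hσgabs : ‖σ g‖ ≤ M := by
      have h := root_bound hAdeg hm1 hA0 hσg
      rw [hM]
      exact h
    have hσβ : σ β = (algebraMap ℚ ℂ r) * σ g := by rw [hβ, map_mul, AlgHom.commutes]
    have hσβabs : ‖σ β‖ ≤ M := by
      rw [hσβ, norm_mul]
      have hrc : ‖algebraMap ℚ ℂ r‖ ≤ 1 := by
        rw [eq_ratCast (algebraMap ℚ ℂ) r,
          show ((r:ℚ):ℂ) = (((r:ℚ):ℝ):ℂ) by push_cast; rfl, Complex.norm_real, Real.norm_eq_abs]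
        exact hrabs
      calc ‖algebraMap ℚ ℂ r‖ * ‖σ g‖ ≤ 1 * M :=
            mul_le_mul hrc hσgabs (norm_nonneg _) zero_le_one
        _ = M := one_mul M
    have haev : ‖Polynomial.aeval (σ β) Q‖ ≤ B := by
      rw [hB]
      exact aeval_int_bound hQd hc hM1 hσβabs
    rw [hσy, norm_mul, norm_pow, Complex.norm_intCast, hcabs]
    exact mul_le_mul_of_nonneg_left haev (by positivity)
  -- assemble
  have hq1R : (1:ℝ) ≤ aA * (q:ℝ) := by
    have : (1:ℝ) ≤ (q:ℝ) := by exact_mod_cast hq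
    nlinarith
  have h1 : (1:ℝ) ≤ ((aA*(q:ℝ))^n * |t|) * ((aA*(q:ℝ))^n * B)^(m-1) := by
    have hNc : ‖((N:ℚ):ℂ)‖ = |((N:ℚ):ℝ)| := by
      rw [show ((N:ℚ):ℂ) = (((N:ℚ):ℝ):ℂ) by push_cast; rfl, Complex.norm_real, Real.norm_eq_abs]
    have hσ₀y : ‖σ₀ y‖ = (aA*(q:ℝ))^n * |t| := by
      rw [hσ₀app, Complex.norm_real, Real.norm_eq_abs, hyR, abs_mul, abs_pow, hcabs]
    calc (1:ℝ) ≤ |((N:ℚ):ℝ)| := hNabs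
      _ = ‖((N:ℚ):ℂ)‖ := hNc.symm
      _ = ‖∏ σ : K →ₐ[ℚ] ℂ, σ y‖ := by rw [hprod]
      _ = ∏ σ : K →ₐ[ℚ] ℂ, ‖σ y‖ := norm_prod _ _
      _ = ‖σ₀ y‖ * ∏ σ ∈ Finset.univ.erase σ₀, ‖σ y‖ :=
          (Finset.mul_prod_erase Finset.univ _ (Finset.mem_univ σ₀)).symm
      _ ≤ ((aA*(q:ℝ))^n * |t|) * ((aA*(q:ℝ))^n * B)^(m-1) := by
          rw [hσ₀y]
          apply mul_le_mul_of_nonneg_left _ (by positivity)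
          calc ∏ σ ∈ Finset.univ.erase σ₀, ‖σ y‖
              ≤ ∏ _σ ∈ Finset.univ.erase σ₀, ((aA*(q:ℝ))^n * B) :=
                Finset.prod_le_prod (fun i _ => norm_nonneg _) (fun i _ => hbound i)
            _ = ((aA*(q:ℝ))^n * B) ^ (Finset.univ.erase σ₀).card := Finset.prod_const _
            _ = ((aA*(q:ℝ))^n * B)^(m-1) := by
                rw [Finset.card_erase_of_mem (Finset.mem_univ _), Finset.card_univ, hcard]
  -- final algebra
  have hexp1 : n + n * (m - 1) = n * m := by
    have hm' : m - 1 + 1 = m := by omega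
    calc n + n * (m-1) = n * ((m-1) + 1) := by ring
      _ = n * m := by rw [hm']
  have hre : ∀ X T BB : ℝ, (X^n * T) * ((X^n * BB)^(m-1)) = (X^(n*m) * BB^(m-1)) * T := by
    intro X T BB
    rw [mul_pow, ← pow_mul]
    calc X^n * T * (X^(n*(m-1)) * BB^(m-1)) = (X^n * X^(n*(m-1))) * BB^(m-1) * T := by ring
      _ = X^(n + n*(m-1)) * BB^(m-1) * T := by rw [pow_add]
      _ = (X^(n*m) * BB^(m-1)) * T := by rw [hexp1]
  rw [hre (aA*(q:ℝ)) |t| B] at h1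
  have hRpos : (0:ℝ) < (aA*(q:ℝ))^(n*m) * B^(m-1) := by positivity
  rw [div_le_iff₀ hRpos]
  calc (1:ℝ) ≤ ((aA*(q:ℝ))^(n*m) * B^(m-1)) * |t| := h1
    _ = |t| * ((aA*(q:ℝ))^(n*m) * B^(m-1)) := by ring

/-- Liouville constant L = ∑ 10^{-j!}, j ≥ 1. -/
noncomputable def Lconst : ℝ := ∑' j : ℕ, 1 / (10 : ℝ) ^ (Nat.factorial (j + 1))

/-- Numerator of k-th truncation of L. -/
def pk (k : ℕ) : ℤ := ∑ j ∈ Finset.range k, 10 ^ ((Nat.factorial k) - (Nat.factorial (j + 1)))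

/-- Denominator of k-th truncation of L. -/
def qk (k : ℕ) : ℤ := 10 ^ (Nat.factorial k)

namespace LHelper

noncomputable abbrev f (j : ℕ) : ℝ := 1 / (10 : ℝ) ^ (Nat.factorial (j + 1))

lemma f_nonneg (j : ℕ) : 0 ≤ f j := by positivity

lemma f_le_geom (j : ℕ) : f j ≤ (1/10 : ℝ) ^ (j + 1) := by
  rw [f, div_pow, one_pow]
  apply one_div_le_one_div_of_le (by positivity)
  exact pow_le_pow_right₀ (by norm_num : (1:ℝ) ≤ 10) (Nat.self_le_factorial (j+1))

lemma f_summable : Summable f :=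
  Summable.of_nonneg_of_le f_nonneg f_le_geom
    (by
      have h := (summable_geometric_of_lt_one (by norm_num : (0:ℝ) ≤ 1/10)
        (by norm_num : (1/10:ℝ) < 1)).mul_left (1/10 : ℝ)
      apply h.congr
      intro j
      rw [← pow_succ'])

lemma Lconst_eq : Lconst = ∑' j, f j := rfl

lemma geom_tsum : ∑' j : ℕ, (1/10:ℝ)^(j+1) = 1/9 := by
  have h1 : ∑' j : ℕ, (1/10:ℝ)^(j+1) = (1/10) * ∑' j : ℕ, (1/10:ℝ)^j := by
    rw [← tsum_mul_left]
    apply tsum_congr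
    intro j
    rw [← pow_succ']
  rw [h1, tsum_geometric_of_lt_one (by norm_num) (by norm_num)]
  norm_num

lemma Lconst_le_one : Lconst ≤ 1 := by
  rw [Lconst_eq]
  calc ∑' j, f j ≤ ∑' j : ℕ, (1/10:ℝ)^(j+1) := by
        apply Summable.tsum_le_tsum f_le_geom f_summable
        have h := (summable_geometric_of_lt_one (by norm_num : (0:ℝ) ≤ 1/10)
          (by norm_num : (1/10:ℝ) < 1)).mul_left (1/10 : ℝ)
        apply h.congr
        intro j
        rw [← pow_succ']
    _ = 1/9 := geom_tsum
    _ ≤ 1 := by norm_num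

lemma qk_cast (k : ℕ) : ((qk k : ℤ) : ℝ) = (10:ℝ) ^ (Nat.factorial k) := by
  rw [qk]; push_cast; ring

lemma qk_pos (k : ℕ) : (0:ℝ) < ((qk k : ℤ) : ℝ) := by rw [qk_cast]; positivity

lemma trunc (k : ℕ) : ((pk k : ℤ) : ℝ) / ((qk k : ℤ) : ℝ) = ∑ j ∈ Finset.range k, f j := by
  rw [pk, qk]
  push_cast
  rw [Finset.sum_div]
  apply Finset.sum_congr rfl
  intro j hj
  have hle : Nat.factorial (j+1) ≤ Nat.factorial k :=
    Nat.factorial_le (by have := Finset.mem_range.mp hj; omega)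
  rw [f, div_eq_div_iff (by positivity) (by positivity), one_mul, ← pow_add,
    Nat.sub_add_cancel hle]

lemma factorial_tail_ineq (k : ℕ) : ∀ i : ℕ, Nat.factorial (k+1) + i ≤ Nat.factorial (i+k+1)
  | 0 => by simp
  | (i+1) => by
    have ih := factorial_tail_ineq k i
    have h1 : Nat.factorial (i+1+k+1) = (i+k+2) * Nat.factorial (i+k+1) := by
      rw [show i+1+k+1 = (i+k+1)+1 by omega, Nat.factorial_succ]
    have h2 : 1 ≤ Nat.factorial (i+k+1) := Nat.one_le_iff_ne_zero.mpr (Nat.factorial_ne_zero _)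
    calc Nat.factorial (k+1) + (i+1) ≤ Nat.factorial (i+k+1) + 1 := by omega
      _ ≤ (i+k+2) * Nat.factorial (i+k+1) := by nlinarith
      _ = Nat.factorial (i+1+k+1) := h1.symm

lemma tail_bound (k : ℕ) :
    |Lconst - ((pk k : ℤ) : ℝ) / ((qk k : ℤ) : ℝ)| ≤ 2 / (10:ℝ) ^ (Nat.factorial (k+1)) := by
  rw [trunc, Lconst_eq]
  have hsum := f_summable
  have hpart := Summable.sum_add_tsum_nat_add k hsum
  have htail : ∑' j, f j - ∑ j ∈ Finset.range k, f j = ∑' i, f (i + k) := by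
    linarith [hpart]
  rw [htail]
  have hg : Summable (fun i : ℕ => (1/10:ℝ)^(Nat.factorial (k+1)) * (1/10:ℝ)^i) :=
    (summable_geometric_of_lt_one (by norm_num) (by norm_num)).mul_left _
  have hb : ∀ i : ℕ, f (i + k) ≤ (1/10:ℝ)^(Nat.factorial (k+1)) * (1/10:ℝ)^i := by
    intro i
    rw [f, ← pow_add, div_pow, one_pow]
    apply one_div_le_one_div_of_le (by positivity)
    exact pow_le_pow_right₀ (by norm_num : (1:ℝ) ≤ 10) (factorial_tail_ineq k i)
  have h0 : (0:ℝ) ≤ ∑' i, f (i + k) :=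
    tsum_nonneg (fun i => f_nonneg _)
  rw [abs_of_nonneg h0]
  calc ∑' i, f (i + k) ≤ ∑' i, (1/10:ℝ)^(Nat.factorial (k+1)) * (1/10:ℝ)^i :=
        Summable.tsum_le_tsum hb ((summable_nat_add_iff k).mpr hsum) hg
    _ = (1/10:ℝ)^(Nat.factorial (k+1)) * (10/9) := by
        rw [tsum_mul_left, tsum_geometric_of_lt_one (by norm_num) (by norm_num)]
        norm_num
    _ ≤ 2 / (10:ℝ)^(Nat.factorial (k+1)) := by
        rw [div_pow, one_pow, div_mul_eq_mul_div, div_le_div_iff₀ (by positivity) (by positivity)]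
        nlinarith [pow_pos (show (0:ℝ) < 10 by norm_num) (Nat.factorial (k+1))]

lemma pk_pos {k : ℕ} (hk : 1 ≤ k) : 0 < pk k := by
  rw [pk]
  apply Finset.sum_pos
  · intro j _
    positivity
  · exact ⟨0, Finset.mem_range.mpr (by omega)⟩

lemma pk_le_qk (k : ℕ) : (pk k : ℝ) ≤ ((qk k : ℤ) : ℝ) := by
  have h1 : ((pk k : ℤ) : ℝ) / ((qk k : ℤ) : ℝ) ≤ 1 := by
    rw [trunc]
    calc ∑ j ∈ Finset.range k, f j ≤ ∑' j, f j := by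
          apply Summable.sum_le_tsum _ (fun i _ => f_nonneg i) f_summable
      _ = Lconst := Lconst_eq.symm
      _ ≤ 1 := Lconst_le_one
  calc (pk k : ℝ) = (((pk k : ℤ) : ℝ) / ((qk k : ℤ) : ℝ)) * ((qk k : ℤ) : ℝ) := by
        rw [div_mul_cancel₀]
        exact (qk_pos k).ne'
    _ ≤ 1 * ((qk k : ℤ) : ℝ) := mul_le_mul_of_nonneg_right h1 (qk_pos k).le
    _ = ((qk k : ℤ) : ℝ) := one_mul _

end LHelper


lemma finite_poly_bounded (n C : ℕ) :
    {P : Polynomial ℤ | P.natDegree ≤ n ∧ ∀ i, (P.coeff i).natAbs ≤ C}.Finite := by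
  apply Set.Finite.of_finite_image (f := fun P : Polynomial ℤ => fun i : Fin (n+1) => P.coeff i)
  · apply Set.Finite.subset
      (Set.Finite.pi (fun _ : Fin (n+1) => Set.finite_Icc (-(C:ℤ)) (C:ℤ)))
    rintro _ ⟨P, ⟨hd, hc⟩, rfl⟩
    rw [Set.mem_univ_pi]
    intro i
    show P.coeff ↑i ∈ Set.Icc (-(C:ℤ)) (C:ℤ)
    rw [Set.mem_Icc]
    have := hc (↑i : ℕ)
    omega
  · intro P hP Q hQ h
    ext i
    rcases le_or_gt i n with hin | hin
    · exact congrFun h ⟨i, by omega⟩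
    · rw [Polynomial.coeff_eq_zero_of_natDegree_lt (lt_of_le_of_lt hP.1 hin),
        Polynomial.coeff_eq_zero_of_natDegree_lt (lt_of_le_of_lt hQ.1 hin)]

lemma finite_bounded_height (n C : ℕ) :
    {γ : ℝ | IsAlgebraic ℚ γ ∧ adeg γ = n ∧ aheight γ ≤ C}.Finite := by
  have hT : ({P : Polynomial ℤ | P.natDegree ≤ n ∧ ∀ i, (P.coeff i).natAbs ≤ C}
      ∩ {P | P ≠ 0}).Finite :=
    (finite_poly_bounded n C).inter_of_left _
  apply Set.Finite.subset (hT.biUnion (fun P hP =>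
    (Polynomial.finite_setOf_isRoot (p := P.map (Int.castRingHom ℝ)) (by
      intro h
      apply hP.2
      have hinj := Polynomial.map_injective (Int.castRingHom ℝ) Int.cast_injective
      apply hinj
      rw [h, Polynomial.map_zero]))))
  intro γ hγ
  obtain ⟨halg, hdeg, hht⟩ := hγ
  have hmem : intMin γ ∈ ({P : Polynomial ℤ | P.natDegree ≤ n ∧ ∀ i, (P.coeff i).natAbs ≤ C}
      ∩ {P | P ≠ 0}) := by
    refine ⟨⟨?_, ?_⟩, intMin_ne_zero γ⟩
    · rw [intMin_natDegree halg, hdeg]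
    · intro i
      have h1 := coeff_abs_le_polyHeight (intMin γ) i
      have h2 : (polyHeight (intMin γ) : ℝ) ≤ (C:ℝ) := by
        have h4 : polyHeight (intMin γ) ≤ C := hht
        exact_mod_cast h4
      have h3 : ((((intMin γ).coeff i).natAbs : ℕ) : ℝ) ≤ (C:ℝ) := by
        rw [Nat.cast_natAbs, Int.cast_abs]
        exact le_trans h1 h2
      exact_mod_cast h3
  have hroot : γ ∈ {x : ℝ | ((intMin γ).map (Int.castRingHom ℝ)).IsRoot x} := by
    have h5 := intMin_aeval halg
    rw [Polynomial.aeval_def, algebraMap_int_eq] at h5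
    show ((intMin γ).map (Int.castRingHom ℝ)).IsRoot γ
    rw [Polynomial.IsRoot.def, Polynomial.eval_map]
    exact h5
  exact Set.mem_biUnion hmem hroot

/-- Set of degree-n algebraic approximants witnessing exponent w. -/
noncomputable def wSet (ξ : ℝ) (n : ℕ) (w : ℝ) : Set ℝ :=
  {γ : ℝ | IsAlgebraic ℚ γ ∧ adeg γ = n ∧ 0 < |ξ - γ| ∧
    |ξ - γ| < (aheight γ : ℝ) ^ (-w - 1)}

/-- ξ is a U_m-number: w*_m(ξ) = ∞ and w*_n(ξ) < ∞ for 1 ≤ n < m. -/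
noncomputable def IsUm (ξ : ℝ) (m : ℕ) : Prop :=
  (∀ w : ℝ, (wSet ξ m w).Infinite) ∧
    ∀ n : ℕ, 1 ≤ n → n < m → ∃ w : ℝ, (wSet ξ n w).Finite

/-- ξ is a Liouville number. -/
def IsLiouvilleNum (x : ℝ) : Prop :=
  ∀ w : ℝ, 0 < w →
    {r : ℚ | 0 < |x - (r : ℝ)| ∧ |x - (r : ℝ)| < (r.den : ℝ) ^ (-w)}.Infinite

/-- Height of a rational number: max of |numerator| and denominator. -/
def qheight (r : ℚ) : ℕ := max r.num.natAbs r.den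

lemma one_le_mul' {a b : ℝ} (ha : 1 ≤ a) (hb : 1 ≤ b) : 1 ≤ a * b := by nlinarith

set_option maxHeartbeats 2000000 in
theorem stmt12 (α : ℝ) (hα : IsAlgebraic ℚ α) (m : ℕ) (hm : adeg α = m)
    (n : ℕ) (hn1 : 1 ≤ n) (hnm : n ≤ m - 1) :
    ∀ w : ℝ, w > 2 * (m : ℝ) ^ 2 * n + m - 1 → (wSet (α * Lconst) n w).Finite := by
  intro w hw
  classical
  have hm2 : 2 ≤ m := by omega
  have hnm' : n < m := by omega
  have hn1' : (1:ℝ) ≤ (n:ℝ) + 1 := by have : (0:ℝ) ≤ (n:ℝ) := Nat.cast_nonneg n; linarith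
  have hw9 : (9:ℝ) ≤ 2*(m:ℝ)^2*(n:ℝ) + (m:ℝ) - 1 := by
    have h2 : (2:ℝ) ≤ (m:ℝ) := by exact_mod_cast hm2
    have h1 : (1:ℝ) ≤ (n:ℝ) := by exact_mod_cast hn1
    nlinarith
  have hw0 : 0 < w := by linarith
  set ξ : ℝ := α * Lconst with hξ
  -- constants
  set aA : ℝ := ((intMin α).leadingCoeff.natAbs : ℝ) with haA
  have haA1 : (1:ℝ) ≤ aA := by
    rw [haA]; exact_mod_cast one_le_natAbs_leadingCoeff (intMin_ne_zero α)
  set M : ℝ := (m : ℝ) * (polyHeight (intMin α) : ℝ) with hM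
  have hM1 : (1:ℝ) ≤ M := by
    rw [hM]
    have h1 : (1:ℝ) ≤ (polyHeight (intMin α) : ℝ) := by
      exact_mod_cast one_le_polyHeight (intMin_ne_zero α)
    have h2 : (1:ℝ) ≤ (m:ℝ) := by exact_mod_cast (by omega : 1 ≤ m)
    nlinarith
  set M₂ : ℝ := M + |α| + |ξ| + 1 with hM2
  have hM21 : (1:ℝ) ≤ M₂ := by
    rw [hM2]; have := abs_nonneg α; have := abs_nonneg ξ; linarith
  set D : ℝ := 4*(|α|+1) with hD
  have hD4 : (4:ℝ) ≤ D := by rw [hD]; have := abs_nonneg α; linarith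
  have hD1 : (1:ℝ) ≤ D := by linarith
  set cG : ℝ := (((n:ℝ)+1) * M^n)^(m-1) * (((n:ℝ)+1)^2 * M₂^n) with hcG
  have hcG1 : (1:ℝ) ≤ cG := by
    rw [hcG]
    exact one_le_mul' (one_le_pow₀ (one_le_mul' hn1' (one_le_pow₀ hM1)))
      (one_le_mul' (one_le_pow₀ hn1') (one_le_pow₀ hM21))
  set c₆ : ℝ := 2*aA^(n*m)*cG*(2*D*aA^(n*m)*cG)^(2*(n*m)) with hc6
  have hc61 : (1:ℝ) ≤ c₆ := by
    rw [hc6]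
    refine one_le_mul' (one_le_mul' (one_le_mul' (by norm_num) (one_le_pow₀ haA1)) hcG1)
      (one_le_pow₀ ?_)
    exact one_le_mul' (one_le_mul' (one_le_mul' (by norm_num) hD1) (one_le_pow₀ haA1)) hcG1
  have hc60 : (0:ℝ) < c₆ := lt_of_lt_of_le one_pos hc61
  set ε : ℝ := w + 1 - (2*(m:ℝ)^2*(n:ℝ) + (m:ℝ)) with hε
  have hεpos : 0 < ε := by rw [hε]; linarith
  set C₀ : ℝ := max ((10:ℝ)^(Nat.factorial (2*(n*m)+2))) (c₆ ^ ((1:ℝ)/ε)) with hC0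
  have hC00 : 0 < C₀ := lt_of_lt_of_le (by positivity) (le_max_left _ _)
  -- the key height bound
  have key : ∀ γ ∈ wSet ξ n w, (aheight γ : ℝ) ≤ C₀ := by
    intro γ hγ
    by_contra hCH
    push_neg at hCH
    obtain ⟨hγalg, hγdeg, hγpos, hγlt⟩ := hγ
    set H : ℝ := (aheight γ : ℝ) with hH
    have hH1 : (1:ℝ) ≤ H := by
      rw [hH]; exact_mod_cast one_le_polyHeight (intMin_ne_zero γ)
    have hHpos : (0:ℝ) < H := lt_of_lt_of_le one_pos hH1
    set u : ℝ := H ^ (w+1) with hu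
    have hu1 : (1:ℝ) ≤ u := Real.one_le_rpow hH1 (by linarith)
    have hupos : 0 < u := lt_of_lt_of_le one_pos hu1
    have hHu : H ≤ u := by
      calc H = H ^ (1:ℝ) := (Real.rpow_one H).symm
        _ ≤ H ^ (w+1) := Real.rpow_le_rpow_of_exponent_le hH1 (by linarith)
    have hγlt' : |ξ - γ| < u⁻¹ := by
      have hrw : H ^ (-w - 1) = u⁻¹ := by
        rw [hu, show (-w - 1 : ℝ) = -(w+1) by ring, Real.rpow_neg (le_of_lt hHpos)]
      rw [← hrw]
      exact hγlt
    have huinv1 : u⁻¹ ≤ 1 := by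
      rw [inv_le_one_iff₀]; right; exact hu1
    -- facts about Q = intMin γ
    have hQd : (intMin γ).natDegree = n := by rw [intMin_natDegree hγalg, hγdeg]
    have hQd' : (intMin γ).natDegree ≤ n := le_of_eq hQd
    have hcoeff : ∀ i, |(((intMin γ).coeff i : ℤ):ℝ)| ≤ H := fun i => by
      rw [hH]; exact coeff_abs_le_polyHeight _ i
    have hγabs : |γ| ≤ |ξ| + 1 := by
      have h1 : |γ| - |ξ| ≤ |ξ - γ| := by
        have h2 := abs_sub_abs_le_abs_sub γ ξ
        rw [abs_sub_comm] at h2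
        linarith
      linarith [le_trans (le_of_lt hγlt') huinv1]
    -- the master inequality
    have star : ∀ j : ℕ, 1 ≤ j →
        (1:ℝ) ≤ aA^(n*m) * ((10:ℝ)^(Nat.factorial j))^(n*m) * cG * H^m *
          |((pk j : ℤ):ℝ)/((qk j : ℤ):ℝ) * α - γ| := by
      intro j hj
      rw [← LHelper.qk_cast j]
      have hsep := sep_lemma hα hm hnm' (intMin_ne_zero γ) hQd' hcoeff hH1
        (LHelper.pk_pos hj) (by exact_mod_cast LHelper.pk_le_qk j)
      rw [← haA, ← hM] at hsep
      have hqk1 : (1:ℝ) ≤ ((qk j : ℤ):ℝ) := by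
        rw [LHelper.qk_cast j]; exact one_le_pow₀ (by norm_num)
      -- difference bound
      have haev0 : Polynomial.aeval γ (intMin γ) = 0 := intMin_aeval hγalg
      have hfr0 : (0:ℝ) ≤ ((pk j : ℤ):ℝ)/((qk j : ℤ):ℝ) := by
        apply div_nonneg _ (LHelper.qk_pos j).le
        exact_mod_cast (LHelper.pk_pos hj).le
      have hfr1 : ((pk j : ℤ):ℝ)/((qk j : ℤ):ℝ) ≤ 1 := by
        rw [div_le_one (LHelper.qk_pos j)]
        exact LHelper.pk_le_qk j
      have hβabs : |((pk j : ℤ):ℝ)/((qk j : ℤ):ℝ) * α| ≤ M₂ := by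
        rw [abs_mul, abs_of_nonneg hfr0]
        calc ((pk j : ℤ):ℝ)/((qk j : ℤ):ℝ) * |α| ≤ 1 * |α| :=
              mul_le_mul_of_nonneg_right hfr1 (abs_nonneg α)
          _ = |α| := one_mul _
          _ ≤ M₂ := by rw [hM2]; have := abs_nonneg ξ; linarith
      have hγabs2 : |γ| ≤ M₂ := by rw [hM2]; linarith
      have hsub := aeval_sub_bound hQd' hcoeff hM21 hβabs hγabs2
      rw [haev0, sub_zero] at hsub
      -- combine
      have h1R : (1:ℝ) ≤ (aA * ((qk j : ℤ):ℝ))^(n*m) * (((n:ℝ)+1)*H*M^n)^(m-1) :=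
        one_le_mul' (one_le_pow₀ (one_le_mul' haA1 hqk1))
          (one_le_pow₀ (one_le_mul' (one_le_mul' hn1' hH1) (one_le_pow₀ hM1)))
      have hRpos := lt_of_lt_of_le one_pos h1R
      have h2 := (div_le_iff₀ hRpos).mp hsep
      have h3 : (1:ℝ) ≤ (((n:ℝ)+1)^2 * H * M₂^n * |((pk j : ℤ):ℝ)/((qk j : ℤ):ℝ) * α - γ|) *
          ((aA * ((qk j : ℤ):ℝ))^(n*m) * (((n:ℝ)+1)*H*M^n)^(m-1)) :=
        le_trans h2 (mul_le_mul_of_nonneg_right hsub hRpos.le)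
      have hpowH : H^(m-1) * H = H^m := by
        rw [← pow_succ]; congr 1; omega
      calc (1:ℝ) ≤ (((n:ℝ)+1)^2 * H * M₂^n * |((pk j : ℤ):ℝ)/((qk j : ℤ):ℝ) * α - γ|) *
            ((aA * ((qk j : ℤ):ℝ))^(n*m) * (((n:ℝ)+1)*H*M^n)^(m-1)) := h3
        _ = aA^(n*m) * (((qk j : ℤ):ℝ))^(n*m) *
              ((((n:ℝ)+1) * M^n)^(m-1) * (((n:ℝ)+1)^2 * M₂^n)) * (H^(m-1) * H) *
              |((pk j : ℤ):ℝ)/((qk j : ℤ):ℝ) * α - γ| := by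
            rw [mul_pow aA, show ((n:ℝ)+1)*H*M^n = (((n:ℝ)+1)*M^n)*H by ring, mul_pow _ H]
            ring
        _ = aA^(n*m) * (((qk j : ℤ):ℝ))^(n*m) * cG * H^m *
              |((pk j : ℤ):ℝ)/((qk j : ℤ):ℝ) * α - γ| := by
            rw [hpowH, hcG]
    -- approximation bound
    have happrox : ∀ j : ℕ, |ξ - ((pk j : ℤ):ℝ)/((qk j : ℤ):ℝ) * α|
        ≤ 2*|α| / (10:ℝ)^(Nat.factorial (j+1)) := by
      intro j
      have h1 : ξ - ((pk j : ℤ):ℝ)/((qk j : ℤ):ℝ) * α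
          = α * (Lconst - ((pk j : ℤ):ℝ)/((qk j : ℤ):ℝ)) := by
        rw [hξ]; ring
      rw [h1, abs_mul]
      calc |α| * |Lconst - ((pk j : ℤ):ℝ)/((qk j : ℤ):ℝ)|
          ≤ |α| * (2/(10:ℝ)^(Nat.factorial (j+1))) :=
            mul_le_mul_of_nonneg_left (LHelper.tail_bound j) (abs_nonneg α)
        _ = 2*|α|/(10:ℝ)^(Nat.factorial (j+1)) := by ring
    -- choice of k
    have hPex : ∃ k : ℕ, D * u ≤ (10:ℝ)^(Nat.factorial (k+1)) := by
      obtain ⟨k, hk⟩ := pow_unbounded_of_one_lt (D*u) (by norm_num : (1:ℝ) < 10)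
      refine ⟨k, le_trans hk.le (pow_le_pow_right₀ (by norm_num) ?_)⟩
      exact le_trans (Nat.le_succ k) (Nat.self_le_factorial (k+1))
    have hk := Nat.find_spec hPex
    have hmin : ∀ j, j < Nat.find hPex → ¬ (D * u ≤ (10:ℝ)^(Nat.factorial (j+1))) :=
      fun j hj => Nat.find_min hPex hj
    have hkbig : 2*(n*m)+2 ≤ Nat.find hPex := by
      by_contra hcon
      push_neg at hcon
      have h10 : (10:ℝ)^(Nat.factorial (Nat.find hPex + 1))
          ≤ (10:ℝ)^(Nat.factorial (2*(n*m)+2)) :=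
        pow_le_pow_right₀ (by norm_num) (Nat.factorial_le (by omega))
      have hC1 : (10:ℝ)^(Nat.factorial (2*(n*m)+2)) ≤ C₀ := le_max_left _ _
      have hDu : C₀ < D * u := by
        calc C₀ < H := hCH
          _ ≤ u := hHu
          _ = 1 * u := (one_mul u).symm
          _ < D * u := mul_lt_mul_of_pos_right (by linarith) hupos
      linarith
    have hfind1 : 1 ≤ Nat.find hPex := by omega
    obtain ⟨k', hkk'⟩ : ∃ k', Nat.find hPex = k' + 1 :=
      ⟨Nat.find hPex - 1, by omega⟩
    rw [hkk'] at hk hkbig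
    have hk'big : 2*(n*m)+1 ≤ k' := by omega
    have hk'1 : 1 ≤ k' := by
      have h1 : 0 < n*m := Nat.mul_pos (by omega) (by omega)
      omega
    have hnotP : (10:ℝ)^(Nat.factorial (k'+1)) < D * u := by
      have := hmin k' (by omega)
      push_neg at this
      exact this
    have hQrel : (10:ℝ)^(Nat.factorial (k'+1)) = ((10:ℝ)^(Nat.factorial k'))^(k'+1) := by
      rw [← pow_mul]
      congr 1
      rw [Nat.factorial_succ]
      ring
    have hQpos : (0:ℝ) < (10:ℝ)^(Nat.factorial (k'+1)) := by positivity
    have hQ'1 : (1:ℝ) ≤ (10:ℝ)^(Nat.factorial k') := one_le_pow₀ (by norm_num)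
    -- inequality (1) at index k'+1
    have hE1 : (1:ℝ) ≤ aA^(n*m) * ((10:ℝ)^(Nat.factorial (k'+1)))^(n*m) * cG * H^m :=
      one_le_mul' (one_le_mul' (one_le_mul' (one_le_pow₀ haA1)
        (one_le_pow₀ (one_le_pow₀ (by norm_num)))) hcG1) (one_le_pow₀ hH1)
    have hone : u ≤ 2 * (aA^(n*m) * ((10:ℝ)^(Nat.factorial (k'+1)))^(n*m) * cG * H^m) := by
      have e1 : |((pk (k'+1) : ℤ):ℝ)/((qk (k'+1) : ℤ):ℝ) * α - γ| ≤ 2 * u⁻¹ := by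
        have t1 := abs_sub_le (((pk (k'+1) : ℤ):ℝ)/((qk (k'+1) : ℤ):ℝ) * α) ξ γ
        have t2 : |((pk (k'+1) : ℤ):ℝ)/((qk (k'+1) : ℤ):ℝ) * α - ξ|
            ≤ 2*|α| / (10:ℝ)^(Nat.factorial (k'+1+1)) := by
          rw [abs_sub_comm]
          exact happrox (k'+1)
        have hDpos : (0:ℝ) < D := by linarith
        have hDupos : (0:ℝ) < D * u := mul_pos hDpos hupos
        have t3 : 2*|α| / (10:ℝ)^(Nat.factorial (k'+1+1)) ≤ 2*|α|/(D*u) :=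
          div_le_div_of_nonneg_left (by positivity) hDupos hk
        have t4 : 2*|α|/(D*u) ≤ (1/2) * u⁻¹ := by
          have e : 2*|α|/(D*u) = (2*|α|/D) * u⁻¹ := by
            rw [← div_div, div_eq_mul_inv]
          rw [e]
          apply mul_le_mul_of_nonneg_right _ (inv_nonneg.mpr hupos.le)
          rw [div_le_iff₀ hDpos, hD]
          have := abs_nonneg α
          linarith
        have t5 : |ξ - γ| ≤ u⁻¹ := le_of_lt hγlt'
        calc |((pk (k'+1) : ℤ):ℝ)/((qk (k'+1) : ℤ):ℝ) * α - γ|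
            ≤ |((pk (k'+1) : ℤ):ℝ)/((qk (k'+1) : ℤ):ℝ) * α - ξ| + |ξ - γ| := t1
          _ ≤ (1/2) * u⁻¹ + u⁻¹ := by linarith [le_trans t2 (le_trans t3 t4)]
          _ ≤ 2 * u⁻¹ := by
              have : (0:ℝ) ≤ u⁻¹ := inv_nonneg.mpr hupos.le
              linarith
      have h2 := star (k'+1) (by omega)
      have h3 : (1:ℝ) ≤ (aA^(n*m) * ((10:ℝ)^(Nat.factorial (k'+1)))^(n*m) * cG * H^m)
          * (2 * u⁻¹) :=
        le_trans h2 (mul_le_mul_of_nonneg_left e1 (by linarith))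
      calc u = u * 1 := (mul_one u).symm
        _ ≤ u * ((aA^(n*m) * ((10:ℝ)^(Nat.factorial (k'+1)))^(n*m) * cG * H^m) * (2 * u⁻¹)) :=
            mul_le_mul_of_nonneg_left h3 hupos.le
        _ = 2 * (aA^(n*m) * ((10:ℝ)^(Nat.factorial (k'+1)))^(n*m) * cG * H^m) * (u * u⁻¹) := by
            ring
        _ = 2 * (aA^(n*m) * ((10:ℝ)^(Nat.factorial (k'+1)))^(n*m) * cG * H^m) := by
            rw [mul_inv_cancel₀ hupos.ne', mul_one]
    -- inequality (2) at index k'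
    have htwo : (10:ℝ)^(Nat.factorial (k'+1))
        ≤ 2*D * (aA^(n*m) * ((10:ℝ)^(Nat.factorial k'))^(n*m) * cG * H^m) := by
      have e2 : |((pk k' : ℤ):ℝ)/((qk k' : ℤ):ℝ) * α - γ|
          ≤ 2*D / (10:ℝ)^(Nat.factorial (k'+1)) := by
        have t1 := abs_sub_le (((pk k' : ℤ):ℝ)/((qk k' : ℤ):ℝ) * α) ξ γ
        have t2 : |((pk k' : ℤ):ℝ)/((qk k' : ℤ):ℝ) * α - ξ|
            ≤ 2*|α| / (10:ℝ)^(Nat.factorial (k'+1)) := by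
          rw [abs_sub_comm]
          exact happrox k'
        have t3 : 2*|α| / (10:ℝ)^(Nat.factorial (k'+1)) ≤ D / (10:ℝ)^(Nat.factorial (k'+1)) := by
          apply (div_le_div_iff_of_pos_right hQpos).mpr
          rw [hD]
          have := abs_nonneg α
          linarith
        have t4 : |ξ - γ| ≤ D / (10:ℝ)^(Nat.factorial (k'+1)) := by
          have t5 : u⁻¹ ≤ D / (10:ℝ)^(Nat.factorial (k'+1)) := by
            rw [inv_eq_one_div, div_le_div_iff₀ hupos hQpos, one_mul]
            linarith [hnotP]
          exact le_trans (le_of_lt hγlt') t5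
        calc |((pk k' : ℤ):ℝ)/((qk k' : ℤ):ℝ) * α - γ|
            ≤ |((pk k' : ℤ):ℝ)/((qk k' : ℤ):ℝ) * α - ξ| + |ξ - γ| := t1
          _ ≤ D / (10:ℝ)^(Nat.factorial (k'+1)) + D / (10:ℝ)^(Nat.factorial (k'+1)) := by
              linarith [le_trans t2 t3]
          _ = 2*D / (10:ℝ)^(Nat.factorial (k'+1)) := by ring
      have h2 := star k' hk'1
      have h3 : (1:ℝ) ≤ (aA^(n*m) * ((10:ℝ)^(Nat.factorial k'))^(n*m) * cG * H^m)
          * (2*D / (10:ℝ)^(Nat.factorial (k'+1))) :=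
        le_trans h2 (mul_le_mul_of_nonneg_left e2 (by
          have hE2 : (1:ℝ) ≤ aA^(n*m) * ((10:ℝ)^(Nat.factorial k'))^(n*m) * cG * H^m :=
            one_le_mul' (one_le_mul' (one_le_mul' (one_le_pow₀ haA1)
              (one_le_pow₀ hQ'1)) hcG1) (one_le_pow₀ hH1)
          linarith))
      calc (10:ℝ)^(Nat.factorial (k'+1)) = (10:ℝ)^(Nat.factorial (k'+1)) * 1 := by ring
        _ ≤ (10:ℝ)^(Nat.factorial (k'+1)) *
            ((aA^(n*m) * ((10:ℝ)^(Nat.factorial k'))^(n*m) * cG * H^m)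
              * (2*D / (10:ℝ)^(Nat.factorial (k'+1)))) :=
            mul_le_mul_of_nonneg_left h3 hQpos.le
        _ = 2*D * (aA^(n*m) * ((10:ℝ)^(Nat.factorial k'))^(n*m) * cG * H^m) *
            ((10:ℝ)^(Nat.factorial (k'+1)) / (10:ℝ)^(Nat.factorial (k'+1))) := by ring
        _ = 2*D * (aA^(n*m) * ((10:ℝ)^(Nat.factorial k'))^(n*m) * cG * H^m) := by
            rw [div_self hQpos.ne', mul_one]
    -- derive the power bound
    have hS : ((10:ℝ)^(Nat.factorial k'))^(k'+1-(n*m)) ≤ 2*D*(aA^(n*m)*cG*H^m) := by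
      have h1 := htwo
      rw [hQrel] at h1
      have hle : n*m ≤ k'+1 := by linarith [hk'big]
      have hsplit : ((10:ℝ)^(Nat.factorial k'))^(k'+1)
          = ((10:ℝ)^(Nat.factorial k'))^(k'+1-(n*m)) * ((10:ℝ)^(Nat.factorial k'))^(n*m) := by
        rw [← pow_add]
        congr 1
        omega
      rw [hsplit] at h1
      have h2 : 2*D * (aA^(n*m) * ((10:ℝ)^(Nat.factorial k'))^(n*m) * cG * H^m)
          = (2*D*(aA^(n*m)*cG*H^m)) * ((10:ℝ)^(Nat.factorial k'))^(n*m) := by ring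
      rw [h2] at h1
      exact le_of_mul_le_mul_right h1 (by positivity)
    have h3 : ((10:ℝ)^(Nat.factorial (k'+1)))^(n*m)
        ≤ (2*D*(aA^(n*m)*cG*H^m))^(2*(n*m)) := by
      rw [hQrel, ← pow_mul]
      have hgen : (k'+1)*(n*m) ≤ (k'+1-(n*m))*(2*(n*m)) := by
        have h1 : k'+1 ≤ 2*(k'+1-(n*m)) := by omega
        calc (k'+1)*(n*m) ≤ (2*(k'+1-(n*m)))*(n*m) := Nat.mul_le_mul_right _ h1
          _ = (k'+1-(n*m))*(2*(n*m)) := by ring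
      calc ((10:ℝ)^(Nat.factorial k'))^((k'+1)*(n*m))
          ≤ ((10:ℝ)^(Nat.factorial k'))^((k'+1-(n*m))*(2*(n*m))) :=
            pow_le_pow_right₀ hQ'1 hgen
        _ = (((10:ℝ)^(Nat.factorial k'))^(k'+1-(n*m)))^(2*(n*m)) := by rw [pow_mul]
        _ ≤ (2*D*(aA^(n*m)*cG*H^m))^(2*(n*m)) :=
            pow_le_pow_left₀ (by positivity) hS _
    -- final combination
    have h4 : u ≤ c₆ * H^(m*(2*(n*m)+1)) := by
      have hhm : H^m * (H^m)^(2*(n*m)) = H^(m*(2*(n*m)+1)) := by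
        rw [← pow_mul, ← pow_add]
        congr 1
        ring
      calc u ≤ 2 * (aA^(n*m) * ((10:ℝ)^(Nat.factorial (k'+1)))^(n*m) * cG * H^m) := hone
        _ = 2 * aA^(n*m) * cG * H^m * ((10:ℝ)^(Nat.factorial (k'+1)))^(n*m) := by ring
        _ ≤ 2 * aA^(n*m) * cG * H^m * (2*D*(aA^(n*m)*cG*H^m))^(2*(n*m)) := by
            apply mul_le_mul_of_nonneg_left h3
            have h9 : (1:ℝ) ≤ 2 * aA^(n*m) * cG * H^m :=
              one_le_mul' (one_le_mul' (one_le_mul' (by norm_num) (one_le_pow₀ haA1)) hcG1)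
                (one_le_pow₀ hH1)
            linarith
        _ = 2 * aA^(n*m) * cG * H^m * ((2*D*aA^(n*m)*cG)^(2*(n*m)) * (H^m)^(2*(n*m))) := by
            rw [show 2*D*(aA^(n*m)*cG*H^m) = (2*D*aA^(n*m)*cG)*H^m by ring, mul_pow]
        _ = (2*aA^(n*m)*cG*(2*D*aA^(n*m)*cG)^(2*(n*m))) * (H^m * (H^m)^(2*(n*m))) := by ring
        _ = c₆ * H^(m*(2*(n*m)+1)) := by rw [hhm, hc6]
    -- contradiction
    have hNc : ((m*(2*(n*m)+1) : ℕ):ℝ) = 2*(m:ℝ)^2*(n:ℝ) + (m:ℝ) := by push_cast; ring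
    have h5 : H ^ ε * H^(m*(2*(n*m)+1)) ≤ c₆ * H^(m*(2*(n*m)+1)) := by
      calc H^ε * H^(m*(2*(n*m)+1)) = H^ε * H^(((m*(2*(n*m)+1) : ℕ)):ℝ) := by
            rw [Real.rpow_natCast]
        _ = H^(ε + ((m*(2*(n*m)+1) : ℕ)):ℝ) := (Real.rpow_add hHpos _ _).symm
        _ = H^(w+1) := by rw [hNc, hε]; ring_nf
        _ = u := by rw [hu]
        _ ≤ c₆ * H^(m*(2*(n*m)+1)) := h4
    have h6 : H^ε ≤ c₆ := le_of_mul_le_mul_right h5 (pow_pos hHpos _)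
    have h7 : c₆ < H^ε := by
      have hC2 : c₆^((1:ℝ)/ε) ≤ C₀ := le_max_right _ _
      have h8 : C₀^ε < H^ε := Real.rpow_lt_rpow (le_of_lt hC00) hCH hεpos
      have h9 : c₆ = (c₆^((1:ℝ)/ε))^ε := by
        rw [← Real.rpow_mul hc60.le, one_div_mul_cancel hεpos.ne', Real.rpow_one]
      calc c₆ = (c₆^((1:ℝ)/ε))^ε := h9
        _ ≤ C₀^ε := Real.rpow_le_rpow (Real.rpow_nonneg hc60.le _) hC2 hεpos.le
        _ < H^ε := h8
    linarith
  -- conclude finiteness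
  apply Set.Finite.subset (finite_bounded_height n (Nat.ceil C₀))
  intro γ hγ
  refine ⟨hγ.1, hγ.2.1, ?_⟩
  have h3 := key γ hγ
  have h4 : (aheight γ : ℝ) ≤ ((Nat.ceil C₀ : ℕ) : ℝ) := le_trans h3 (Nat.le_ceil C₀)
  exact_mod_cast h4
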